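/- The corona limit of a lattice periodic Delone tiling of ℝ^l (with an adjacency compatible with the lattice translations) exists and is a convex polyhedron symmetric with respect to the origin; it equals the convex hull of the finite set { x/η(x) : x ∈ 𝓛, 0 < n(x,0) ≤ 3M−2 }, where M is the number of translation classes of tiles. -/

import Mathlib

open Pointwise Metric

namespace CoronaAux

structure Setup (l : ℕ) (ι : Type*) where
  part : ι → Set (EuclideanSpace ℝ (Fin l))
  hpart : ∀ x, ∃! i, x ∈ part i
  s : ℝ
  S : ℝ
  hs : 0 < s
  hS : 0 < S
  cin : ι → EuclideanSpace ℝ (Fin l)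
  hcin : ∀ i, ball (cin i) s ⊆ part i
  cout : ι → EuclideanSpace ℝ (Fin l)
  hcout : ∀ i, closure (part i) ⊆ closedBall (cout i) S
  adj : ι → ι → Prop
  hrefl : ∀ i, adj i i
  hsymm : ∀ i j, adj i j → adj j i
  hconn : ∀ i j, ∃ (m : ℕ) (f : ℕ → ι), f 0 = i ∧ f m = j ∧ ∀ k < m, adj (f k) (f (k+1))
  R : ℝ
  hR : ∀ i j, adj i j → hausdorffDist (closure (part i)) (closure (part j)) ≤ R
  L : AddSubgroup (EuclideanSpace ℝ (Fin l))
  bas : Module.Basis (Fin l) ℝ (EuclideanSpace ℝ (Fin l))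
  hbas : ∀ k, bas k ∈ L
  σ : L → ι ≃ ι
  hσpart : ∀ p i, part (σ p i) = (p : EuclideanSpace ℝ (Fin l)) +ᵥ part i
  hσadj : ∀ p i j, adj (σ p i) (σ p j) ↔ adj i j
  M : ℕ
  reps : Finset ι
  hcard : reps.card = M
  hcover : ∀ i, ∃ j ∈ reps, ∃ p, σ p j = i
  hsep : ∀ j₁ ∈ reps, ∀ j₂ ∈ reps, (∃ p, σ p j₁ = j₂) → j₁ = j₂

namespace Setup

variable {l : ℕ} {ι : Type*} (T : Setup l ι)

local notation "E" => EuclideanSpace ℝ (Fin l)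

/-- the tile of a point -/
noncomputable def tl (x : E) : ι := (T.hpart x).choose

lemma mem_tl (x : E) : x ∈ T.part (T.tl x) := (T.hpart x).choose_spec.1

lemma tl_eq {x : E} {i : ι} (h : x ∈ T.part i) : T.tl x = i :=
  ((T.hpart x).choose_spec.2 i h).symm

lemma part_nonempty (i : ι) : (T.part i).Nonempty :=
  ⟨T.cin i, T.hcin i (mem_ball_self T.hs)⟩

lemma cin_mem (i : ι) : T.cin i ∈ T.part i := T.hcin i (mem_ball_self T.hs)

lemma part_inj {i j : ι} (h : T.part i = T.part j) : i = j := by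
  obtain ⟨x, hx⟩ := T.part_nonempty i
  have hx' : x ∈ T.part j := h ▸ hx
  rw [← T.tl_eq hx, T.tl_eq hx']

lemma σ_add (p q : T.L) (i : ι) : T.σ (p + q) i = T.σ p (T.σ q i) := by
  apply T.part_inj
  rw [T.hσpart, T.hσpart, T.hσpart, AddSubgroup.coe_add, ← vadd_vadd]

lemma σ_zero (i : ι) : T.σ 0 i = i := by
  apply T.part_inj
  rw [T.hσpart]
  simp

lemma σ_neg (p : T.L) (i : ι) : T.σ (-p) (T.σ p i) = i := by
  rw [← T.σ_add]; simp [T.σ_zero]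

lemma σ_neg' (p : T.L) (i : ι) : T.σ p (T.σ (-p) i) = i := by
  rw [← T.σ_add]; simp [T.σ_zero]

lemma σ_inj {p : T.L} {i j : ι} (h : T.σ p i = T.σ p j) : i = j :=
  (T.σ p).injective h

lemma tl_add (a : E) (p : T.L) : T.tl ((p : E) + a) = T.σ p (T.tl a) := by
  apply T.tl_eq
  rw [T.hσpart]
  exact ⟨a, T.mem_tl a, rfl⟩

/-- chains -/
def chainProp (f : ℕ → ι) (m : ℕ) (i j : ι) : Prop :=
  f 0 = i ∧ f m = j ∧ ∀ k < m, T.adj (f k) (f (k+1))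

/-- combinatorial distance between tiles -/
noncomputable def cd (i j : ι) : ℕ := sInf {m | ∃ f, T.chainProp f m i j}

lemma cdSet_nonempty (i j : ι) : {m | ∃ f, T.chainProp f m i j}.Nonempty := by
  obtain ⟨m, f, h1, h2, h3⟩ := T.hconn i j
  exact ⟨m, f, h1, h2, h3⟩

lemma cd_le {f : ℕ → ι} {m : ℕ} {i j : ι} (h : T.chainProp f m i j) : T.cd i j ≤ m :=
  Nat.sInf_le ⟨f, h⟩

lemma exists_chain_cd (i j : ι) : ∃ f, T.chainProp f m i j → True := ⟨fun _ => i, fun _ => trivial⟩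

lemma exists_chain (i j : ι) : ∃ f, T.chainProp f (T.cd i j) i j :=
  Nat.sInf_mem (T.cdSet_nonempty i j)

lemma cd_self (i : ι) : T.cd i i = 0 :=
  Nat.le_zero.mp (T.cd_le (f := fun _ => i) ⟨rfl, rfl, fun k hk => absurd hk (Nat.not_lt_zero k)⟩)

lemma chain_symm {f : ℕ → ι} {m : ℕ} {i j : ι} (h : T.chainProp f m i j) :
    T.chainProp (fun k => f (m - k)) m j i := by
  obtain ⟨h1, h2, h3⟩ := h
  refine ⟨by simpa using h2, by simpa using h1, fun k hk => ?_⟩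
  have e1 : m - k = (m - (k+1)) + 1 := by omega
  have := h3 (m - (k+1)) (by omega)
  apply T.hsymm
  show T.adj (f (m - (k+1))) (f (m - k))
  rw [e1]
  exact this

lemma cd_symm (i j : ι) : T.cd i j = T.cd j i := by
  apply le_antisymm
  · obtain ⟨f, hf⟩ := T.exists_chain j i
    exact T.cd_le (T.chain_symm hf)
  · obtain ⟨f, hf⟩ := T.exists_chain i j
    exact T.cd_le (T.chain_symm hf)

lemma chain_trans {f g : ℕ → ι} {m₁ m₂ : ℕ} {i j k : ι}
    (hf : T.chainProp f m₁ i j) (hg : T.chainProp g m₂ j k) :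
    T.chainProp (fun t => if t ≤ m₁ then f t else g (t - m₁)) (m₁ + m₂) i k := by
  obtain ⟨hf1, hf2, hf3⟩ := hf
  obtain ⟨hg1, hg2, hg3⟩ := hg
  refine ⟨by simpa using hf1, ?_, fun t ht => ?_⟩
  · by_cases h : m₂ = 0
    · subst h; simpa [hf2, ← hg1] using hg2
    · have : ¬ (m₁ + m₂ ≤ m₁) := by omega
      simpa [this] using hg2
  · by_cases h1 : t + 1 ≤ m₁
    · have h2 : t ≤ m₁ := by omega
      simpa [h1, h2] using hf3 t (by omega)
    · by_cases h2 : t ≤ m₁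
      · have e : t = m₁ := by omega
        subst e
        have : g ((t+1) - t) = g 1 := by congr 1; omega
        simp only [h1, h2, if_true, if_false, this]
        rw [hf2, ← hg1]
        have := hg3 0 (by omega)
        simpa using this
      · simp only [h1, h2, if_false]
        have e : t + 1 - m₁ = (t - m₁) + 1 := by omega
        rw [e]
        exact hg3 (t - m₁) (by omega)

lemma cd_triangle (i j k : ι) : T.cd i k ≤ T.cd i j + T.cd j k := by
  obtain ⟨f, hf⟩ := T.exists_chain i j
  obtain ⟨g, hg⟩ := T.exists_chain j k
  exact T.cd_le (T.chain_trans hf hg)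

lemma chain_σ {f : ℕ → ι} {m : ℕ} {i j : ι} (p : T.L) (h : T.chainProp f m i j) :
    T.chainProp (fun k => T.σ p (f k)) m (T.σ p i) (T.σ p j) := by
  obtain ⟨h1, h2, h3⟩ := h
  exact ⟨by simp only [h1], by simp only [h2], fun k hk => (T.hσadj p _ _).mpr (h3 k hk)⟩

lemma cd_σ (p : T.L) (i j : ι) : T.cd (T.σ p i) (T.σ p j) = T.cd i j := by
  apply le_antisymm
  · obtain ⟨f, hf⟩ := T.exists_chain i j
    exact T.cd_le (T.chain_σ p hf)
  · obtain ⟨f, hf⟩ := T.exists_chain (T.σ p i) (T.σ p j)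
    have := T.chain_σ (-p) hf
    rw [T.σ_neg, T.σ_neg] at this
    exact T.cd_le this

/-- padding: chains of any length at least `cd` -/
lemma chain_pad {i j : ι} {m : ℕ} (h : T.cd i j ≤ m) : ∃ f, T.chainProp f m i j := by
  obtain ⟨f, h1, h2, h3⟩ := T.exists_chain i j
  refine ⟨fun k => f (min k (T.cd i j)), by simpa using h1, ?_, fun k hk => ?_⟩
  · simp [min_eq_right h, h2]
  · rcases lt_or_ge k (T.cd i j) with hlt | hge
    · show T.adj (f (min k (T.cd i j))) (f (min (k+1) (T.cd i j)))
      rw [min_eq_left (by omega : k ≤ T.cd i j), min_eq_left (by omega : k + 1 ≤ T.cd i j)]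
      exact h3 k hlt
    · show T.adj (f (min k (T.cd i j))) (f (min (k+1) (T.cd i j)))
      rw [min_eq_right (by omega : T.cd i j ≤ k), min_eq_right (by omega : T.cd i j ≤ k + 1)]
      exact T.hrefl _


/-! ### geometry -/

lemma R_nonneg : 0 ≤ T.R := by
  have h := T.hR (T.tl 0) (T.tl 0) (T.hrefl _)
  simpa [Metric.hausdorffDist_self_zero] using h

lemma closure_bounded (i : ι) : Bornology.IsBounded (closure (T.part i)) :=
  (Metric.isBounded_closedBall).subset (T.hcout i)

lemma dist_cout_adj {i j : ι} (h : T.adj i j) :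
    dist (T.cout i) (T.cout j) ≤ 2 * T.S + T.R := by
  have hne : (closure (T.part j)).Nonempty := (T.part_nonempty j).closure
  have hfin : EMetric.hausdorffEdist (closure (T.part i)) (closure (T.part j)) ≠ ⊤ :=
    Metric.hausdorffEdist_ne_top_of_nonempty_of_bounded (T.part_nonempty i).closure hne
      (T.closure_bounded i) (T.closure_bounded j)
  have hy : T.cin i ∈ closure (T.part i) := subset_closure (T.cin_mem i)
  have h1 : infDist (T.cin i) (closure (T.part j)) ≤ T.R :=
    le_trans (Metric.infDist_le_hausdorffDist_of_mem hy hfin) (T.hR i j h)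
  obtain ⟨z, hz, hz2⟩ := IsClosed.exists_infDist_eq_dist isClosed_closure hne (T.cin i)
  have hd1 : dist (T.cin i) z ≤ T.R := by rw [← hz2]; exact h1
  have hd2 : dist (T.cin i) (T.cout i) ≤ T.S := by
    have := T.hcout i hy; rwa [Metric.mem_closedBall] at this
  have hd3 : dist z (T.cout j) ≤ T.S := by
    have := T.hcout j hz; rwa [Metric.mem_closedBall] at this
  calc dist (T.cout i) (T.cout j) ≤ dist (T.cout i) (T.cin i) + dist (T.cin i) z + dist z (T.cout j) :=
        dist_triangle4 _ _ _ _
    _ ≤ T.S + T.R + T.S :=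
        add_le_add (add_le_add (by rw [dist_comm]; exact hd2) hd1) hd3
    _ = 2 * T.S + T.R := by ring

lemma dist_cout_chain {m : ℕ} : ∀ {f : ℕ → ι} {i j : ι}, T.chainProp f m i j →
    dist (T.cout i) (T.cout j) ≤ m * (2 * T.S + T.R) := by
  induction m with
  | zero => intro f i j ⟨h1, h2, _⟩; simp [← h1, ← h2]
  | succ m ih =>
    intro f i j ⟨h1, h2, h3⟩
    push_cast
    have hstep : T.adj (f m) (f (m+1)) := h3 m (by omega)
    have hc : T.chainProp f m i (f m) := ⟨h1, rfl, fun k hk => h3 k (by omega)⟩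
    calc dist (T.cout i) (T.cout j) ≤ dist (T.cout i) (T.cout (f m)) + dist (T.cout (f m)) (T.cout j) :=
          dist_triangle _ _ _
      _ ≤ m * (2 * T.S + T.R) + (2 * T.S + T.R) :=
          add_le_add (ih hc) (by rw [← h2]; exact T.dist_cout_adj hstep)
      _ = ((m : ℝ) + 1) * (2 * T.S + T.R) := by ring

/-- geometric distance is bounded by combinatorial distance -/
lemma dist_le_cd {x y : E} {i j : ι} (hx : x ∈ closure (T.part i)) (hy : y ∈ closure (T.part j)) :
    dist x y ≤ 2 * T.S + T.cd i j * (2 * T.S + T.R) := by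
  obtain ⟨f, hf⟩ := T.exists_chain i j
  have h1 : dist x (T.cout i) ≤ T.S := by
    have := T.hcout i hx; rwa [Metric.mem_closedBall] at this
  have h2 : dist y (T.cout j) ≤ T.S := by
    have := T.hcout j hy; rwa [Metric.mem_closedBall] at this
  calc dist x y ≤ dist x (T.cout i) + dist (T.cout i) (T.cout j) + dist (T.cout j) y :=
        dist_triangle4 _ _ _ _
    _ ≤ T.S + T.cd i j * (2 * T.S + T.R) + T.S :=
        add_le_add (add_le_add h1 (T.dist_cout_chain hf)) (by rw [dist_comm]; exact h2)
    _ = 2 * T.S + T.cd i j * (2 * T.S + T.R) := by ring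

/-! ### discreteness of the lattice -/

lemma eq_zero_of_fix {p : T.L} {i : ι} (h : T.σ p i = i) : p = 0 := by
  have hpart : T.part i = (p : E) +ᵥ T.part i := by rw [← T.hσpart, h]
  have key : ∀ n : ℕ, T.cin i + n • (p : E) ∈ T.part i := by
    intro n
    induction n with
    | zero => simpa using T.cin_mem i
    | succ n ih =>
      have : (p : E) + (T.cin i + n • (p : E)) ∈ (p : E) +ᵥ T.part i := ⟨_, ih, rfl⟩
      rw [← hpart] at this
      convert this using 1
      rw [succ_nsmul]
      module
  by_contra hne
  have hpne : (p : E) ≠ 0 := by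
    intro h0
    exact hne (by ext : 1; exact h0)
  have hnorm : 0 < ‖(p : E)‖ := norm_pos_iff.mpr hpne
  obtain ⟨n, hn⟩ := exists_nat_gt ((2 * T.S) / ‖(p : E)‖)
  have h1 : dist (T.cin i + n • (p : E)) (T.cin i) ≤ 2 * T.S := by
    have ha := T.hcout i (subset_closure (key n))
    have hb := T.hcout i (subset_closure (T.cin_mem i))
    rw [Metric.mem_closedBall] at ha hb
    calc dist (T.cin i + n • (p : E)) (T.cin i)
        ≤ dist (T.cin i + n • (p : E)) (T.cout i) + dist (T.cin i) (T.cout i) :=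
          dist_triangle_right _ _ _
      _ ≤ T.S + T.S := add_le_add ha hb
      _ = 2 * T.S := by ring
  have h2 : dist (T.cin i + n • (p : E)) (T.cin i) = n * ‖(p : E)‖ := by
    rw [dist_eq_norm]
    have : T.cin i + n • (p : E) - T.cin i = n • (p : E) := by abel
    rw [this, ← Nat.cast_smul_eq_nsmul ℝ, norm_smul]
    simp
  rw [h2] at h1
  have : (n : ℝ) * ‖(p : E)‖ > 2 * T.S := by
    rw [div_lt_iff₀ hnorm] at hn
    linarith
  linarith

lemma lattice_sep {p : T.L} (h : (p : E) ≠ 0) : 2 * T.s ≤ ‖(p : E)‖ := by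
  by_contra hlt
  push_neg at hlt
  set i := T.tl 0 with hi
  set w : E := T.cin i + (2⁻¹ : ℝ) • (p : E) with hw
  have hw1 : w ∈ T.part i := by
    apply T.hcin i
    rw [Metric.mem_ball, dist_eq_norm]
    have : w - T.cin i = (2⁻¹ : ℝ) • (p : E) := by rw [hw]; module
    rw [this, norm_smul]
    simp only [norm_inv, Real.norm_ofNat]
    calc 2⁻¹ * ‖(p : E)‖ < 2⁻¹ * (2 * T.s) := by
          apply mul_lt_mul_of_pos_left hlt; norm_num
      _ = T.s := by ring
  have hw2 : w ∈ T.part (T.σ p i) := by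
    rw [T.hσpart]
    refine ⟨T.cin i - (2⁻¹ : ℝ) • (p : E) + (p:E) - (p:E), ?_, ?_⟩
    · apply T.hcin i
      rw [Metric.mem_ball, dist_eq_norm]
      have : T.cin i - (2⁻¹ : ℝ) • (p : E) + (p:E) - (p:E) - T.cin i = -((2⁻¹ : ℝ) • (p : E)) := by
        module
      rw [this, norm_neg, norm_smul]
      simp only [norm_inv, Real.norm_ofNat]
      calc 2⁻¹ * ‖(p : E)‖ < 2⁻¹ * (2 * T.s) := by
            apply mul_lt_mul_of_pos_left hlt; norm_num
        _ = T.s := by ring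
    · show (p:E) + _ = w
      rw [hw]; module
  have : T.σ p i = i := by
    obtain ⟨j, _, huniq⟩ := T.hpart w
    exact (huniq _ hw2).trans (huniq _ hw1).symm
  have := T.eq_zero_of_fix this
  rw [this] at h
  simp at h

/-! ### finiteness from separation -/

lemma finite_of_separated {A : Set E} {R₀ ε : ℝ} (hε : 0 < ε)
    (hA : A ⊆ closedBall (0 : E) R₀)
    (hsep : ∀ x ∈ A, ∀ y ∈ A, x ≠ y → ε ≤ dist x y) : A.Finite := by
  by_contra hinf
  have htb : TotallyBounded (closedBall (0 : E) R₀) :=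
    (isCompact_closedBall _ _).totallyBounded
  rw [totallyBounded_iff] at htb
  obtain ⟨t, htfin, htcov⟩ := htb (ε / 2) (by linarith)
  have hcover : A ⊆ ⋃ y ∈ t, A ∩ ball y (ε / 2) := by
    intro x hx
    obtain ⟨_, ⟨y, rfl⟩, hy⟩ := htcov (hA hx)
    simp only [Set.mem_iUnion] at hy ⊢
    obtain ⟨hyt, hxy⟩ := hy
    exact ⟨y, hyt, hx, hxy⟩
  have : ∃ y ∈ t, (A ∩ ball y (ε / 2)).Infinite := by
    by_contra hall
    push_neg at hall
    exact hinf (Set.Finite.subset (Set.Finite.biUnion htfin hall) hcover)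
  obtain ⟨y, _, hyinf⟩ := this
  obtain ⟨a, ha, b, hb, hab⟩ := hyinf.nontrivial
  have h1 : ε ≤ dist a b := hsep a ha.1 b hb.1 hab
  have h2 : dist a b < ε := by
    calc dist a b ≤ dist a y + dist y b := dist_triangle _ _ _
      _ < ε / 2 + ε / 2 := by
          apply add_lt_add ha.2
          rw [dist_comm]; exact hb.2
      _ = ε := by ring
  linarith

lemma lattice_ball_finite (R₀ : ℝ) : {x : E | x ∈ T.L ∧ ‖x‖ ≤ R₀}.Finite := by
  apply finite_of_separated (ε := 2 * T.s) (R₀ := R₀) (by linarith [T.hs])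
  · intro x hx
    rw [Metric.mem_closedBall, dist_zero_right]
    exact hx.2
  · rintro x ⟨hxL, -⟩ y ⟨hyL, -⟩ hxy
    have hne : ((⟨x, hxL⟩ - ⟨y, hyL⟩ : T.L) : E) ≠ 0 := by
      simp only [AddSubgroup.coe_sub]
      intro h
      exact hxy (sub_eq_zero.mp h)
    have := T.lattice_sep hne
    rw [dist_eq_norm]
    simpa using this

lemma cin_inj : Function.Injective T.cin := by
  intro i j h
  have h1 : T.cin i ∈ T.part i := T.cin_mem i
  have h2 : T.cin i ∈ T.part j := h ▸ T.cin_mem j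
  obtain ⟨k, _, huniq⟩ := T.hpart (T.cin i)
  exact (huniq _ h1).trans (huniq _ h2).symm

lemma cin_sep {i j : ι} (h : i ≠ j) : 2 * T.s ≤ dist (T.cin i) (T.cin j) := by
  by_contra hlt
  push_neg at hlt
  set w : E := T.cin i + (2⁻¹ : ℝ) • (T.cin j - T.cin i) with hw
  have hmem : ∀ k : ι, dist w (T.cin k) < T.s → w ∈ T.part k := fun k hk =>
    T.hcin k (Metric.mem_ball.mpr hk)
  have hd1 : dist w (T.cin i) = 2⁻¹ * dist (T.cin i) (T.cin j) := by
    rw [dist_eq_norm, dist_eq_norm]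
    have : w - T.cin i = (2⁻¹ : ℝ) • (T.cin j - T.cin i) := by rw [hw]; module
    rw [this, norm_smul, norm_sub_rev]
    simp
  have hd2 : dist w (T.cin j) = 2⁻¹ * dist (T.cin i) (T.cin j) := by
    rw [dist_eq_norm, dist_eq_norm]
    have : w - T.cin j = -((2⁻¹ : ℝ) • (T.cin j - T.cin i)) := by rw [hw]; module
    rw [this, norm_neg, norm_smul, norm_sub_rev]
    simp
  have hw1 : w ∈ T.part i := hmem i (by rw [hd1]; nlinarith [T.hs])
  have hw2 : w ∈ T.part j := hmem j (by rw [hd2]; nlinarith [T.hs])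
  obtain ⟨k, _, huniq⟩ := T.hpart w
  exact h ((huniq _ hw1).trans (huniq _ hw2).symm)

lemma tiles_meeting_finite (R₀ : ℝ) :
    {i : ι | (T.part i ∩ closedBall (0 : E) R₀).Nonempty}.Finite := by
  have himg : (T.cin '' {i : ι | (T.part i ∩ closedBall (0 : E) R₀).Nonempty}).Finite := by
    apply finite_of_separated (ε := 2 * T.s) (R₀ := R₀ + 2 * T.S) (by linarith [T.hs])
    · rintro x ⟨i, ⟨q, hq1, hq2⟩, rfl⟩
      rw [Metric.mem_closedBall, dist_zero_right]
      have h1 : dist (T.cin i) q ≤ 2 * T.S := by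
        have ha := T.hcout i (subset_closure (T.cin_mem i))
        have hb := T.hcout i (subset_closure hq1)
        rw [Metric.mem_closedBall] at ha hb
        calc dist (T.cin i) q ≤ dist (T.cin i) (T.cout i) + dist (T.cout i) q :=
              dist_triangle _ _ _
          _ ≤ T.S + T.S := add_le_add ha (by rw [dist_comm]; exact hb)
          _ = 2 * T.S := by ring
      have h2 : ‖q‖ ≤ R₀ := by rwa [Metric.mem_closedBall, dist_zero_right] at hq2
      calc ‖T.cin i‖ = ‖(T.cin i - q) + q‖ := by congr 1; abel
        _ ≤ ‖T.cin i - q‖ + ‖q‖ := norm_add_le _ _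
        _ ≤ 2 * T.S + R₀ := add_le_add (by rw [← dist_eq_norm]; exact h1) h2
        _ = R₀ + 2 * T.S := by ring
    · rintro x ⟨i, -, rfl⟩ y ⟨j, -, rfl⟩ hne
      exact T.cin_sep (fun h => hne (by rw [h]))
  exact Set.Finite.of_finite_image himg (Set.InjOn.mono (fun _ _ => trivial) (T.cin_inj.injOn))

/-! ### relative denseness -/

lemma rel_dense : ∃ ρ : ℝ, 0 < ρ ∧ ∀ u : E, ∃ p : T.L, ‖u - (p : E)‖ ≤ ρ := by
  refine ⟨(∑ k, ‖T.bas k‖) + 1, by positivity, fun u => ?_⟩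
  set c : Fin l → ℝ := fun k => T.bas.repr u k with hc
  have hp : (∑ k, (⌊c k⌋ : ℤ) • T.bas k) ∈ T.L :=
    AddSubgroup.sum_mem _ (fun k _ => AddSubgroup.zsmul_mem _ (T.hbas k) _)
  refine ⟨⟨_, hp⟩, ?_⟩
  have hu : u = ∑ k, c k • T.bas k := (T.bas.sum_repr u).symm
  have hdiff : u - (∑ k, (⌊c k⌋ : ℤ) • T.bas k) = ∑ k, Int.fract (c k) • T.bas k := by
    rw [hu, ← Finset.sum_sub_distrib]
    congr 1
    ext k
    rw [← Int.cast_smul_eq_zsmul ℝ, ← sub_smul]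
    rfl
  rw [AddSubgroup.coe_mk, hdiff]
  calc ‖∑ k, Int.fract (c k) • T.bas k‖ ≤ ∑ k, ‖Int.fract (c k) • T.bas k‖ :=
        norm_sum_le _ _
    _ ≤ ∑ k, ‖T.bas k‖ := by
        apply Finset.sum_le_sum
        intro k _
        rw [norm_smul, Real.norm_eq_abs, abs_of_nonneg (Int.fract_nonneg _)]
        nlinarith [Int.fract_lt_one (c k), Int.fract_nonneg (c k), norm_nonneg (T.bas k)]
    _ ≤ (∑ k, ‖T.bas k‖) + 1 := by linarith

/-- local bound on combinatorial distance -/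
lemma cd_loc (r : ℝ) : ∃ D : ℕ, ∀ u v : E, dist u v ≤ r → T.cd (T.tl u) (T.tl v) ≤ D := by
  obtain ⟨ρ, hρ, hρd⟩ := T.rel_dense
  set B := closedBall (0 : E) (ρ + max r 0) with hB
  have hfin := T.tiles_meeting_finite (ρ + max r 0)
  set F := hfin.toFinset with hF
  refine ⟨F.sup (fun i => F.sup (fun j => T.cd i j)), fun u v huv => ?_⟩
  obtain ⟨p, hp⟩ := hρd u
  have htlu : T.tl u = T.σ p (T.tl (u - (p:E))) := by
    rw [← T.tl_add]
    congr 1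
    abel
  have htlv : T.tl v = T.σ p (T.tl (v - (p:E))) := by
    rw [← T.tl_add]
    congr 1
    abel
  rw [htlu, htlv, T.cd_σ]
  have hmemu : T.tl (u - (p:E)) ∈ F := by
    rw [hF, Set.Finite.mem_toFinset]
    refine ⟨u - (p:E), T.mem_tl _, ?_⟩
    rw [Metric.mem_closedBall, dist_zero_right]
    calc ‖u - (p:E)‖ ≤ ρ := hp
      _ ≤ ρ + max r 0 := by linarith [le_max_right r 0]
  have hmemv : T.tl (v - (p:E)) ∈ F := by
    rw [hF, Set.Finite.mem_toFinset]
    refine ⟨v - (p:E), T.mem_tl _, ?_⟩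
    rw [Metric.mem_closedBall, dist_zero_right]
    have : ‖v - (p:E)‖ ≤ ‖v - u‖ + ‖u - (p:E)‖ := by
      calc ‖v - (p:E)‖ = ‖(v - u) + (u - (p:E))‖ := by congr 1; abel
        _ ≤ ‖v - u‖ + ‖u - (p:E)‖ := norm_add_le _ _
    have hr : ‖v - u‖ ≤ max r 0 := by
      rw [← dist_eq_norm, dist_comm]
      exact le_trans huv (le_max_left _ _)
    linarith
  calc T.cd (T.tl (u - (p:E))) (T.tl (v - (p:E)))
      ≤ F.sup (fun j => T.cd (T.tl (u - (p:E))) j) := Finset.le_sup hmemv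
    _ ≤ F.sup (fun i => F.sup (fun j => T.cd i j)) :=
        Finset.le_sup (f := fun i => F.sup (fun j => T.cd i j)) hmemu


/-! ### classes -/

lemma cd_eq_zero_iff {i j : ι} : T.cd i j = 0 ↔ i = j := by
  constructor
  · intro h
    obtain ⟨f, h1, h2, -⟩ := T.exists_chain i j
    rw [h] at h2
    rw [← h1, h2]
  · rintro rfl; exact T.cd_self i

lemma M_pos : 0 < T.M := by
  obtain ⟨r, hr, -⟩ := T.hcover (T.tl 0)
  rw [← T.hcard]
  exact Finset.card_pos.mpr ⟨r, hr⟩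

/-- representative of the translation class of a tile -/
noncomputable def rp (j : ι) : ι := (T.hcover j).choose

lemma rp_mem (j : ι) : T.rp j ∈ T.reps := (T.hcover j).choose_spec.1

lemma rp_spec (j : ι) : ∃ p, T.σ p (T.rp j) = j := (T.hcover j).choose_spec.2

/-- distance from a base tile to the class of `j` -/
noncomputable def gcl (i j : ι) : ℕ := sInf {m | ∃ p : T.L, T.cd i (T.σ p j) = m}

lemma gcl_le (i j : ι) (p : T.L) : T.gcl i j ≤ T.cd i (T.σ p j) :=
  Nat.sInf_le ⟨p, rfl⟩

lemma gcl_achieved (i j : ι) : ∃ p : T.L, T.cd i (T.σ p j) = T.gcl i j :=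
  Nat.sInf_mem (⟨T.cd i (T.σ 0 j), 0, rfl⟩ : {m | ∃ p : T.L, T.cd i (T.σ p j) = m}.Nonempty)

lemma gcl_σ (i j : ι) (q : T.L) : T.gcl i (T.σ q j) = T.gcl i j := by
  unfold gcl
  congr 1
  ext m
  constructor
  · rintro ⟨p, rfl⟩
    exact ⟨p + q, by rw [T.σ_add]⟩
  · rintro ⟨p, rfl⟩
    refine ⟨p - q, ?_⟩
    rw [← T.σ_add]
    have : (p - q) + q = p := by abel
    rw [this]

lemma gcl_succ {i j : ι} (h : T.gcl i j ≠ 0) : ∃ j', T.gcl i j' + 1 = T.gcl i j := by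
  obtain ⟨p, hp⟩ := T.gcl_achieved i j
  set k := T.gcl i j with hk
  obtain ⟨f, hf1, hf2, hf3⟩ := T.exists_chain i (T.σ p j)
  rw [hp] at hf2 hf3
  set j' := f (k - 1) with hj'
  have h1 : T.cd i j' ≤ k - 1 :=
    T.cd_le (f := f) ⟨hf1, rfl, fun t ht => hf3 t (by omega)⟩
  have h2 : T.gcl i j ≤ T.gcl i j' + 1 := by
    obtain ⟨p', hp'⟩ := T.gcl_achieved i j'
    have hadj : T.adj (T.σ p' j') (T.σ p' (f k)) := (T.hσadj p' _ _).mpr (by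
      have := hf3 (k - 1) (by omega)
      rw [show k - 1 + 1 = k by omega] at this
      exact this)
    have hcd : T.cd i (T.σ p' (f k)) ≤ T.gcl i j' + 1 := by
      refine le_trans (T.cd_triangle i (T.σ p' j') (T.σ p' (f k))) ?_
      have : T.cd (T.σ p' j') (T.σ p' (f k)) ≤ 1 :=
        T.cd_le (f := fun t => if t = 0 then T.σ p' j' else T.σ p' (f k))
          ⟨rfl, rfl, fun t ht => by
            have : t = 0 := by omega
            subst this
            simpa using hadj⟩
      omega
    have : T.gcl i (f k) ≤ T.gcl i j' + 1 := le_trans (T.gcl_le i (f k) p') hcd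
    rwa [hf2, gcl_σ] at this
  have h3 : T.gcl i j' ≤ k - 1 := le_trans (by simpa using T.gcl_le i j' 0) (by
    rw [T.σ_zero]; exact h1)
  exact ⟨j', by omega⟩

lemma gcl_le_M (i j : ι) : T.gcl i j ≤ T.M - 1 := by
  have key : ∀ k : ℕ, ∀ j : ι, T.gcl i j = k → ∀ t ≤ k, ∃ j', T.gcl i j' = t := by
    intro k
    induction k with
    | zero => intro j hj t ht; exact ⟨j, by omega⟩
    | succ k ih =>
      intro j hj t ht
      obtain ⟨j', hj'⟩ := T.gcl_succ (i := i) (j := j) (h := by omega)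
      rcases Nat.lt_or_ge t (k+1) with h | h
      · exact ih j' (by omega) t (by omega)
      · exact ⟨j, by omega⟩
  by_contra hlt
  push_neg at hlt
  have hM := T.M_pos
  have hsub : Finset.range (T.gcl i j + 1) ⊆ T.reps.image (fun r => T.gcl i r) := by
    intro t ht
    rw [Finset.mem_range] at ht
    obtain ⟨j', hj'⟩ := key (T.gcl i j) j rfl t (by omega)
    obtain ⟨pr, hpr⟩ := T.rp_spec j'
    rw [Finset.mem_image]
    refine ⟨T.rp j', T.rp_mem j', ?_⟩
    calc T.gcl i (T.rp j') = T.gcl i (T.σ pr (T.rp j')) := (T.gcl_σ i _ pr).symm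
      _ = T.gcl i j' := by rw [hpr]
      _ = t := hj'
  have := Finset.card_le_card hsub
  rw [Finset.card_range] at this
  have h2 := Finset.card_image_le (s := T.reps) (f := fun r => T.gcl i r)
  rw [T.hcard] at h2
  omega

lemma reach (i j : ι) : ∃ p : T.L, T.cd i (T.σ p j) ≤ T.M - 1 := by
  obtain ⟨p, hp⟩ := T.gcl_achieved i j
  exact ⟨p, by rw [hp]; exact T.gcl_le_M i j⟩

/-! ### lattice distance functions -/

noncomputable def t0 : ι := T.tl 0

noncomputable def del (p : T.L) : ℕ := T.cd (T.σ p T.t0) T.t0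

noncomputable def etaL (p : T.L) : ℕ := sInf {m | ∃ i, T.cd i (T.σ (-p) i) = m}

lemma etaL_le (p : T.L) (i : ι) : T.etaL p ≤ T.cd i (T.σ (-p) i) :=
  Nat.sInf_le ⟨i, rfl⟩

lemma etaL_achieved (p : T.L) : ∃ i, T.cd i (T.σ (-p) i) = T.etaL p :=
  Nat.sInf_mem (⟨_, T.t0, rfl⟩ : {m | ∃ i, T.cd i (T.σ (-p) i) = m}.Nonempty)

lemma etaL_neg (p : T.L) : T.etaL (-p) = T.etaL p := by
  unfold etaL
  congr 1
  ext m
  constructor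
  · rintro ⟨i, rfl⟩
    refine ⟨T.σ (- -p) i, ?_⟩
    rw [T.cd_symm]
    congr 1
    rw [← T.σ_add]
    simp [T.σ_zero]
  · rintro ⟨i, rfl⟩
    refine ⟨T.σ (-p) i, ?_⟩
    rw [T.cd_symm]
    congr 1
    rw [← T.σ_add]
    simp [T.σ_zero]

lemma etaL_achieved' (p : T.L) : ∃ i, T.cd i (T.σ p i) = T.etaL p := by
  obtain ⟨i, hi⟩ := T.etaL_achieved (-p)
  rw [neg_neg] at hi
  rw [← T.etaL_neg]
  exact ⟨i, hi⟩

lemma etaL_zero : T.etaL 0 = 0 :=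
  Nat.le_zero.mp (le_trans (T.etaL_le 0 T.t0) (by rw [neg_zero, T.σ_zero, T.cd_self]))

lemma etaL_pos {p : T.L} (hp : p ≠ 0) : 1 ≤ T.etaL p := by
  by_contra h
  push_neg at h
  interval_cases he : T.etaL p
  obtain ⟨i, hi⟩ := T.etaL_achieved p
  rw [he, T.cd_eq_zero_iff] at hi
  have : -p = 0 := T.eq_zero_of_fix hi.symm
  apply hp
  simpa using this.symm

lemma del_zero_iff {p : T.L} : T.del p = 0 ↔ p = 0 := by
  constructor
  · intro h
    rw [del, T.cd_eq_zero_iff] at h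
    exact T.eq_zero_of_fix h
  · rintro rfl
    rw [del, T.σ_zero, T.cd_self]

lemma del_neg (p : T.L) : T.del (-p) = T.del p := by
  unfold del
  rw [T.cd_symm, ← T.cd_σ (p := p)]
  congr 1
  rw [← T.σ_add]
  simp [T.σ_zero]

lemma del_add (p q : T.L) : T.del (p + q) ≤ T.del p + T.del q := by
  have h1 : T.cd (T.σ (p + q) T.t0) (T.σ p T.t0) = T.cd (T.σ q T.t0) T.t0 := by
    rw [← T.cd_σ (p := -p) (i := T.σ (p + q) T.t0) (j := T.σ p T.t0), ← T.σ_add, ← T.σ_add]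
    have e1 : -p + (p + q) = q := by abel
    have e2 : -p + p = (0 : T.L) := by abel
    rw [e1, e2, T.σ_zero]
  have h2 := T.cd_triangle (T.σ (p + q) T.t0) (T.σ p T.t0) T.t0
  unfold del
  omega

/-- uniform bound: from any tile, one can reach a translate by `p` within `η(p) + 2(M-1)` -/
lemma etaL_unif (p : T.L) (i : ι) : T.cd i (T.σ p i) ≤ T.etaL p + 2 * (T.M - 1) := by
  obtain ⟨j, hj⟩ := T.etaL_achieved' p
  obtain ⟨q, hq⟩ := T.reach i j
  have h1 : T.cd i (T.σ q j) ≤ T.M - 1 := hq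
  have h2 : T.cd (T.σ q j) (T.σ q (T.σ p j)) = T.etaL p := by rw [T.cd_σ]; exact hj
  have h3 : T.cd (T.σ q (T.σ p j)) (T.σ p i) = T.cd i (T.σ q j) := by
    rw [← T.σ_add, ← T.cd_σ (p := -p), ← T.σ_add, ← T.σ_add]
    have e1 : -p + (q + p) = q := by abel
    have e2 : (-p) + p = (0:T.L) := by abel
    rw [e1, e2, T.σ_zero, T.cd_symm]
  calc T.cd i (T.σ p i) ≤ T.cd i (T.σ q j) + T.cd (T.σ q j) (T.σ q (T.σ p j))
        + T.cd (T.σ q (T.σ p j)) (T.σ p i) := by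
        refine le_trans (T.cd_triangle i (T.σ q j) _) ?_
        have := T.cd_triangle (T.σ q j) (T.σ q (T.σ p j)) (T.σ p i)
        omega
    _ ≤ (T.M - 1) + T.etaL p + (T.M - 1) := by
        rw [h2, h3]
        omega
    _ ≤ T.etaL p + 2 * (T.M - 1) := by omega

lemma del_le_etaL (p : T.L) : T.del p ≤ T.etaL p + 2 * (T.M - 1) := by
  have := T.etaL_unif p T.t0
  rw [del, T.cd_symm]
  exact this

lemma etaL_le_del (p : T.L) : T.etaL p ≤ T.del p := by
  refine le_trans (T.etaL_le p (T.σ p T.t0)) ?_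
  rw [← T.σ_add]
  have e : -p + p = (0:T.L) := by abel
  rw [e, T.σ_zero]
  exact le_refl _

lemma etaL_nsmul (k : ℕ) (p : T.L) : T.etaL (k • p) ≤ k * T.etaL p := by
  obtain ⟨i, hi⟩ := T.etaL_achieved p
  have key : ∀ k : ℕ, T.cd i (T.σ (-(k • p)) i) ≤ k * T.etaL p := by
    intro k
    induction k with
    | zero => simp [T.σ_zero, T.cd_self]
    | succ k ih =>
      have step : T.cd (T.σ (-(k • p)) i) (T.σ (-((k+1) • p)) i) = T.etaL p := by
        rw [← T.cd_σ (p := k • p), ← T.σ_add, ← T.σ_add]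
        have e1 : k • p + -(k • p) = (0:T.L) := by abel
        have e2 : k • p + -((k+1) • p) = -p := by
          rw [succ_nsmul]; abel
        rw [e1, e2, T.σ_zero]
        exact hi
      calc T.cd i (T.σ (-((k+1) • p)) i)
          ≤ T.cd i (T.σ (-(k • p)) i) + T.cd (T.σ (-(k • p)) i) (T.σ (-((k+1) • p)) i) :=
            T.cd_triangle _ _ _
        _ ≤ k * T.etaL p + T.etaL p := by rw [step]; omega
        _ = (k+1) * T.etaL p := by ring
  exact le_trans (T.etaL_le _ i) (key k)

/-! ### the decomposition -/

lemma decomp {p : T.L} (hp : T.M < T.etaL p) :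
    ∃ q y : T.L, p = -q + y ∧ q ≠ 0 ∧ T.etaL q ≤ T.M ∧ y ≠ 0 ∧
      T.etaL y + T.etaL q ≤ T.etaL p := by
  obtain ⟨i, hi⟩ := T.etaL_achieved p
  set N := T.etaL p with hN
  obtain ⟨f, hf1, hf2, hf3⟩ := T.exists_chain i (T.σ (-p) i)
  rw [hi] at hf2 hf3
  -- pigeonhole on the first M+1 tiles
  have hmap : ∀ k ∈ Finset.range (T.M + 1), T.rp (f k) ∈ T.reps := fun k _ => T.rp_mem (f k)
  obtain ⟨a, ha, b, hb, hab, heq⟩ :=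
    Finset.exists_ne_map_eq_of_card_lt_of_maps_to
      (by rw [Finset.card_range, T.hcard]; omega) hmap
  rw [Finset.mem_range] at ha hb
  -- wlog a < b
  wlog hlt : a < b generalizing a b
  · exact this b hb a ha (Ne.symm hab) heq.symm (by omega)
  obtain ⟨pa, hpa⟩ := T.rp_spec (f a)
  obtain ⟨pb, hpb⟩ := T.rp_spec (f b)
  set q : T.L := pb - pa with hq
  have hfb : f b = T.σ q (f a) := by
    have h1 : T.σ q (f a) = T.σ q (T.σ pa (T.rp (f a))) := by rw [hpa]
    rw [h1, ← T.σ_add, heq]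
    have h2 : q + pa = pb := by rw [hq]; abel
    rw [h2, hpb]
  have hbN : b ≤ T.M := by omega
  have haN : a < N := by omega
  have hbN' : b < N := by omega
  -- q ≠ 0, else we could shorten the minimal chain
  have hqne : q ≠ 0 := by
    intro h0
    rw [h0, T.σ_zero] at hfb
    have hshort : T.cd i (T.σ (-p) i) ≤ N - (b - a) := by
      apply T.cd_le (f := fun t => if t ≤ a then f t else f (t + (b - a)))
      refine ⟨by simpa using hf1, ?_, ?_⟩
      · have h1 : ¬ (N - (b - a) ≤ a) := by omega
        simp only [h1, if_false]
        rw [show N - (b - a) + (b - a) = N by omega]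
        exact hf2
      · intro t ht
        by_cases h1 : t + 1 ≤ a
        · have h2 : t ≤ a := by omega
          simp only [h1, h2, if_true]
          exact hf3 t (by omega)
        · by_cases h2 : t ≤ a
          · have : t = a := by omega
            subst this
            simp only [h1, h2, if_true, if_false]
            rw [show t + 1 + (b - t) = b + 1 by omega, ← hfb]
            exact hf3 b (by omega)
          · simp only [h1, h2, if_false]
            rw [show t + 1 + (b - a) = (t + (b - a)) + 1 by omega]
            exact hf3 (t + (b - a)) (by omega)
    rw [hi] at hshort
    omega
  -- η(q) ≤ b - a
  have hetaq : T.etaL q ≤ b - a := by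
    rw [← T.etaL_neg]
    refine le_trans (T.etaL_le (-q) (f a)) ?_
    rw [neg_neg, ← hfb]
    apply T.cd_le (f := fun t => f (a + t))
    refine ⟨by simp, ?_, fun t ht => ?_⟩
    · show f (a + (b - a)) = f b
      congr 1
      omega
    · show T.adj (f (a + t)) (f (a + (t + 1)))
      rw [show a + (t + 1) = (a + t) + 1 by omega]
      exact hf3 (a + t) (by omega)
  -- η(p + q) ≤ N - (b - a)
  have hetay : T.etaL (p + q) ≤ N - (b - a) := by
    refine le_trans (T.etaL_le (p + q) i) ?_
    apply T.cd_le (f := fun t => if t ≤ a then f t else T.σ (-q) (f (t + (b - a))))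
    refine ⟨by simpa using hf1, ?_, ?_⟩
    · have h1 : ¬ (N - (b - a) ≤ a) := by omega
      simp only [h1, if_false]
      rw [show N - (b - a) + (b - a) = N by omega, hf2, ← T.σ_add]
      congr 1
      abel
    · intro t ht
      by_cases h1 : t + 1 ≤ a
      · have h2 : t ≤ a := by omega
        simp only [h1, h2, if_true]
        exact hf3 t (by omega)
      · by_cases h2 : t ≤ a
        · have : t = a := by omega
          subst this
          simp only [h1, h2, if_true, if_false]
          rw [show t + 1 + (b - t) = b + 1 by omega]
          have : f t = T.σ (-q) (f b) := by
            rw [hfb, ← T.σ_add]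
            have : -q + q = (0:T.L) := by abel
            rw [this, T.σ_zero]
          rw [this]
          exact (T.hσadj (-q) _ _).mpr (hf3 b (by omega))
        · simp only [h1, h2, if_false]
          rw [show t + 1 + (b - a) = (t + (b - a)) + 1 by omega]
          exact (T.hσadj (-q) _ _).mpr (hf3 (t + (b - a)) (by omega))
  refine ⟨q, p + q, by abel, hqne, le_trans hetaq (by omega), ?_, ?_⟩
  · rintro h0
    have : p = -q := by
      have := congrArg (fun z => z - q) h0
      simpa using this
    rw [hN] at hp
    rw [this, T.etaL_neg] at hp
    omega
  · omega


/-! ### the sets V and K -/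

noncomputable def dd (x y : E) : ℕ := T.cd (T.tl x) (T.tl y)

noncomputable def VV : Set E := {x | x ∈ T.L ∧ 0 < T.dd x 0 ∧ T.dd x 0 ≤ 3 * T.M - 2}

noncomputable def ee (v : E) : ℕ := sInf {m | ∃ a b : E, a - b = v ∧ T.dd a b = m}

noncomputable def KK : Set E := convexHull ℝ ((fun x => ((T.ee x : ℝ)⁻¹ • x)) '' T.VV)

lemma tl_coe (p : T.L) : T.tl (p : E) = T.σ p T.t0 := by
  rw [show ((p : E)) = (p : E) + 0 by simp, T.tl_add]
  rfl

lemma tl_sub (a : E) (p : T.L) : T.tl (a - (p : E)) = T.σ (-p) (T.tl a) := by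
  rw [show a - (p : E) = ((-p : T.L) : E) + a by push_cast; abel, T.tl_add]

lemma dd_del (p : T.L) : T.dd (p : E) 0 = T.del p := by
  show T.cd (T.tl ((p : E))) (T.tl 0) = T.cd (T.σ p T.t0) T.t0
  rw [T.tl_coe]
  rfl

lemma del_pos_of_ne {p : T.L} (hp : p ≠ 0) : 0 < T.del p :=
  Nat.pos_of_ne_zero (fun h => hp (T.del_zero_iff.mp h))

lemma ee_eq (p : T.L) : T.ee (p : E) = T.etaL p := by
  unfold ee etaL
  congr 1
  ext m
  constructor
  · rintro ⟨a, b, hab, rfl⟩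
    refine ⟨T.tl a, ?_⟩
    have hb : b = a - (p : E) := by rw [← hab]; abel
    rw [dd, hb, T.tl_sub]
  · rintro ⟨i, rfl⟩
    refine ⟨T.cin i, T.cin i - (p : E), by abel, ?_⟩
    unfold dd
    rw [T.tl_sub, T.tl_eq (T.cin_mem i)]

lemma mem_VV_iff {p : T.L} : (p : E) ∈ T.VV ↔ (p ≠ 0 ∧ T.del p ≤ 3 * T.M - 2) := by
  constructor
  · rintro ⟨-, h1, h2⟩
    rw [T.dd_del] at h1 h2
    exact ⟨fun h0 => absurd h1 (by rw [h0, show T.del (0 : T.L) = 0 from T.del_zero_iff.mpr rfl]; omega), h2⟩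
  · rintro ⟨h1, h2⟩
    exact ⟨p.2, by rw [T.dd_del]; exact T.del_pos_of_ne h1, by rw [T.dd_del]; exact h2⟩

lemma VV_neg {x : E} (hx : x ∈ T.VV) : -x ∈ T.VV := by
  set p : T.L := ⟨x, hx.1⟩ with hp
  have hx' : (p : E) ∈ T.VV := hx
  rw [T.mem_VV_iff] at hx'
  have : ((-p : T.L) : E) ∈ T.VV := by
    rw [T.mem_VV_iff]
    refine ⟨by simpa using hx'.1, by rw [T.del_neg]; exact hx'.2⟩
  simpa using this

lemma ee_neg {x : E} (hx : x ∈ T.L) : T.ee (-x) = T.ee x := by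
  set p : T.L := ⟨x, hx⟩
  have h1 : T.ee ((p : E)) = T.etaL p := T.ee_eq p
  have h2 : T.ee ((-p : T.L) : E) = T.etaL (-p) := T.ee_eq (-p)
  simp only [AddSubgroup.coe_neg] at h2
  rw [show (-x : E) = -(p : E) from rfl, h2, h1, T.etaL_neg]

lemma gen_mem {x : E} (hx : x ∈ T.VV) : ((T.ee x : ℝ))⁻¹ • x ∈ T.KK :=
  subset_convexHull ℝ _ (Set.mem_image_of_mem _ hx)

lemma KK_convex : Convex ℝ T.KK := convex_convexHull ℝ _

lemma zero_mem_KK {x : E} (hx : x ∈ T.VV) : (0 : E) ∈ T.KK := by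
  have g1 := T.gen_mem hx
  have g2 := T.gen_mem (T.VV_neg hx)
  rw [T.ee_neg hx.1] at g2
  have := T.KK_convex g1 g2 (by norm_num : (0:ℝ) ≤ 1/2) (by norm_num : (0:ℝ) ≤ 1/2)
    (by norm_num)
  convert this using 1
  module

lemma KK_symm {y : E} (hy : y ∈ T.KK) : -y ∈ T.KK := by
  set G := (fun x => ((T.ee x : ℝ)⁻¹ • x)) '' T.VV with hG
  have hGneg : ∀ g ∈ G, -g ∈ G := by
    rintro g ⟨x, hx, rfl⟩
    refine ⟨-x, T.VV_neg hx, ?_⟩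
    show ((T.ee (-x) : ℝ))⁻¹ • (-x) = -(((T.ee x : ℝ))⁻¹ • x)
    rw [T.ee_neg hx.1]
    module
  have hGsub : -G ⊆ G := by
    intro z hz
    rw [Set.mem_neg] at hz
    have := hGneg _ hz
    simpa using this
  have hGeq : -G = G := by
    apply Set.Subset.antisymm hGsub
    intro z hz
    rw [Set.mem_neg]
    exact hGneg _ hz
  have h2 : -T.KK = T.KK := by
    show -(convexHull ℝ G) = convexHull ℝ G
    rw [← convexHull_neg, hGeq]
  rw [← h2, Set.mem_neg, neg_neg]
  exact hy

lemma etaL_cast_pos {p : T.L} (hp : p ≠ 0) : (0 : ℝ) < (T.etaL p : ℝ) := by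
  exact_mod_cast T.etaL_pos hp

/-- key theorem: every nonzero lattice vector, normalized by `η`, lies in `K` -/
lemma mem_KK {p : T.L} (hp : p ≠ 0) : ((T.etaL p : ℝ))⁻¹ • (p : E) ∈ T.KK := by
  suffices H : ∀ n (p : T.L), p ≠ 0 → T.etaL p = n →
      ((T.etaL p : ℝ))⁻¹ • (p : E) ∈ T.KK from H _ p hp rfl
  intro n
  induction n using Nat.strong_induction_on with
  | _ n ih =>
    intro p hp hn
    by_cases hcase : T.del p ≤ 3 * T.M - 2
    · have hVV : (p : E) ∈ T.VV := T.mem_VV_iff.mpr ⟨hp, hcase⟩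
      have := T.gen_mem hVV
      rwa [T.ee_eq] at this
    · push_neg at hcase
      have hM1 : 1 ≤ T.M := T.M_pos
      have hMlt : T.M < T.etaL p := by
        have h1 := T.del_le_etaL p
        omega
      obtain ⟨q, y, hpy, hq0, hqM, hy0, hsum⟩ := T.decomp hMlt
      have hdelq : T.del q ≤ 3 * T.M - 2 := le_trans (T.del_le_etaL q) (by omega)
      have hqVV : ((q : E)) ∈ T.VV := T.mem_VV_iff.mpr ⟨hq0, hdelq⟩
      have hnqVV : (-(q : E)) ∈ T.VV := T.VV_neg hqVV
      have g1 : ((T.etaL q : ℝ))⁻¹ • (-(q : E)) ∈ T.KK := by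
        have := T.gen_mem hnqVV
        rwa [T.ee_neg q.2, T.ee_eq] at this
      have hylt : T.etaL y < n := by
        have := T.etaL_pos hq0
        omega
      have g2 : ((T.etaL y : ℝ))⁻¹ • (y : E) ∈ T.KK := ih (T.etaL y) hylt y hy0 rfl
      have g0 : (0 : E) ∈ T.KK := T.zero_mem_KK hqVV
      set ep : ℝ := (T.etaL p : ℝ) with hep
      set eQ : ℝ := (T.etaL q : ℝ) with heQ
      set eY : ℝ := (T.etaL y : ℝ) with heY
      have hep0 : 0 < ep := T.etaL_cast_pos hp
      have heq0 : 0 < eQ := T.etaL_cast_pos hq0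
      have hey0 : 0 < eY := T.etaL_cast_pos hy0
      have hsum' : eY + eQ ≤ ep := by rw [hep, heQ, heY]; exact_mod_cast hsum
      set w : ℝ := (eQ + eY) / ep with hw
      have hw0 : 0 < w := by positivity
      have hw1 : w ≤ 1 := by
        rw [hw, div_le_one hep0]
        linarith
      have hu : (eQ / (eQ + eY)) • ((eQ)⁻¹ • (-(q : E))) +
          (eY / (eQ + eY)) • ((eY)⁻¹ • (y : E)) ∈ T.KK := by
        apply T.KK_convex g1 g2 (by positivity) (by positivity)
        field_simp
      have hfinal := T.KK_convex hu g0 hw0.le (by linarith : (0:ℝ) ≤ 1 - w) (by ring)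
      have hpe : (p : E) = -(q : E) + (y : E) := by
        rw [hpy]; push_cast; ring
      convert hfinal using 1
      rw [hpe]
      match_scalars <;> (rw [hw]; field_simp; try ring)

/-! ### boundedness and finiteness of V -/

lemma norm_le_dd (x y : E) : dist x y ≤ 2 * T.S + T.dd x y * (2 * T.S + T.R) :=
  T.dist_le_cd (subset_closure (T.mem_tl x)) (subset_closure (T.mem_tl y))

lemma VV_bounded : ∀ x ∈ T.VV, ‖x‖ ≤ 2 * T.S + (3 * T.M - 2 : ℕ) * (2 * T.S + T.R) := by
  intro x hx
  have h1 := T.norm_le_dd x 0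
  rw [dist_zero_right] at h1
  have h2 : (T.dd x 0 : ℝ) * (2 * T.S + T.R) ≤ ((3 * T.M - 2 : ℕ) : ℝ) * (2 * T.S + T.R) := by
    apply mul_le_mul_of_nonneg_right
    · exact_mod_cast hx.2.2
    · have := T.R_nonneg
      have := T.hS
      linarith
  linarith

lemma VV_finite : T.VV.Finite := by
  apply Set.Finite.subset (T.lattice_ball_finite (2 * T.S + (3 * T.M - 2 : ℕ) * (2 * T.S + T.R)))
  intro x hx
  exact ⟨hx.1, T.VV_bounded x hx⟩

lemma ee_pos_of_VV {x : E} (hx : x ∈ T.VV) : 1 ≤ T.ee x := by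
  set p : T.L := ⟨x, hx.1⟩
  have hp : p ≠ 0 := by
    have := (T.mem_VV_iff (p := p)).mp hx
    exact this.1
  have : T.ee ((p : E)) = T.etaL p := T.ee_eq p
  rw [show x = (p : E) from rfl, this]
  exact T.etaL_pos hp

lemma KK_bounded : T.KK ⊆ closedBall (0 : E) (2 * T.S + (3 * T.M - 2 : ℕ) * (2 * T.S + T.R)) := by
  apply convexHull_min
  · rintro g ⟨x, hx, rfl⟩
    rw [Metric.mem_closedBall, dist_zero_right, norm_smul]
    have h1 : ‖((T.ee x : ℝ))⁻¹‖ ≤ 1 := by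
      rw [Real.norm_eq_abs, abs_inv]
      have h2 : (1:ℝ) ≤ (T.ee x : ℝ) := by exact_mod_cast T.ee_pos_of_VV hx
      rw [abs_of_nonneg (by linarith)]
      rw [inv_le_one_iff₀]
      right; exact h2
    have h3 := T.VV_bounded x hx
    have h4 : (0:ℝ) ≤ ‖x‖ := norm_nonneg x
    nlinarith [norm_nonneg x]
  · exact convex_closedBall _ _


/-! ### subadditivity and the upper bound -/

lemma etaL_add (p q : T.L) : T.etaL (p + q) ≤ T.etaL p + T.etaL q + 2 * (T.M - 1) := by
  obtain ⟨i, hi⟩ := T.etaL_achieved p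
  have h2 : T.cd (T.σ (-p) i) (T.σ (-(p + q)) i) ≤ T.etaL q + 2 * (T.M - 1) := by
    have h3 := T.etaL_unif (-q) (T.σ (-p) i)
    rw [T.etaL_neg] at h3
    rw [← T.σ_add] at h3
    have e : -q + -p = -(p + q) := by abel
    rwa [e] at h3
  have h4 := T.cd_triangle i (T.σ (-p) i) (T.σ (-(p + q)) i)
  have h5 := T.etaL_le (p + q) i
  omega

lemma etaL_sum {α : Type*} (s : Finset α) (P : α → T.L) :
    T.etaL (∑ a ∈ s, P a) ≤ (∑ a ∈ s, T.etaL (P a)) + 2 * (T.M - 1) * s.card := by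
  classical
  induction s using Finset.induction_on with
  | empty => simp [T.etaL_zero]
  | insert _ _ ha ih =>
    rename_i a s
    rw [Finset.sum_insert ha, Finset.sum_insert ha, Finset.card_insert_of_notMem ha]
    have h1 := T.etaL_add (P a) (∑ x ∈ s, P x)
    calc T.etaL (P a + ∑ x ∈ s, P x)
        ≤ T.etaL (P a) + T.etaL (∑ x ∈ s, P x) + 2 * (T.M - 1) := h1
      _ ≤ T.etaL (P a) + ((∑ x ∈ s, T.etaL (P x)) + 2 * (T.M - 1) * s.card)
          + 2 * (T.M - 1) := add_le_add (add_le_add le_rfl ih) le_rfl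
      _ = (T.etaL (P a) + ∑ x ∈ s, T.etaL (P x)) + 2 * (T.M - 1) * (s.card + 1) := by ring

set_option maxHeartbeats 2000000 in
/-- the fundamental upper bound: points near `t • K` have combinatorial distance
to the origin at most `t + C`. -/
lemma dd_le_of_near_smul (r : ℝ) : ∃ C : ℝ, 0 ≤ C ∧ ∀ (t : ℝ) (u : E), 0 ≤ t →
    (∃ kk ∈ T.KK, ∃ e : E, ‖e‖ ≤ r ∧ u = t • kk + e) → (T.dd u 0 : ℝ) ≤ t + C := by
  classical
  set Vfin := T.VV_finite.toFinset with hVfin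
  set f : E → E := fun x => ((T.ee x : ℝ))⁻¹ • x with hf
  set Gfin := Vfin.image f with hGfin
  set RV : ℝ := 2 * T.S + ((3 * T.M - 2 : ℕ) : ℝ) * (2 * T.S + T.R) with hRV
  have hRV0 : 0 ≤ RV := by
    have h1 := T.hS
    have h2 := T.R_nonneg
    have h3 : (0:ℝ) ≤ ((3 * T.M - 2 : ℕ) : ℝ) := Nat.cast_nonneg _
    nlinarith
  set r' : ℝ := r + Gfin.card * RV with hr'
  obtain ⟨D, hD⟩ := T.cd_loc r'
  refine ⟨(D : ℝ) + 2 * ((T.M - 1 : ℕ) : ℝ) * (Gfin.card + 1), by positivity, ?_⟩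
  rintro t u ht ⟨kk, hkk, e, he, hu⟩
  -- representation of kk as a convex combination
  have hkk2 : kk ∈ convexHull ℝ ((fun x => ((T.ee x : ℝ))⁻¹ • x) '' T.VV) := hkk
  have hset : ((fun x => ((T.ee x : ℝ))⁻¹ • x) '' T.VV) = (↑Gfin : Set E) := by
    rw [hGfin, Finset.coe_image, hVfin, Set.Finite.coe_toFinset]
  rw [hset, Finset.convexHull_eq] at hkk2
  obtain ⟨w, hw0, hw1, hwc⟩ := hkk2
  have hkkeq : kk = ∑ g ∈ Gfin, w g • g := by
    have h := Finset.centerMass_eq_of_sum_1 Gfin id hw1 (w := w)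
    rw [hwc] at h
    simpa using h
  -- choose preimages in V
  have hpre : ∀ g : E, ∃ x : E, g ∈ Gfin → (x ∈ T.VV ∧ f x = g) := by
    intro g
    by_cases hg : g ∈ Gfin
    · rw [hGfin, Finset.mem_image] at hg
      obtain ⟨x, hx, hfx⟩ := hg
      rw [hVfin, Set.Finite.mem_toFinset] at hx
      exact ⟨x, fun _ => ⟨hx, hfx⟩⟩
    · exact ⟨0, fun h => absurd h hg⟩
  choose X hX using hpre
  have hXV : ∀ g ∈ Gfin, X g ∈ T.VV := fun g hg => (hX g hg).1
  have hXf : ∀ g ∈ Gfin, ((T.ee (X g) : ℝ))⁻¹ • (X g) = g := fun g hg => (hX g hg).2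
  set P : E → T.L := fun g => if hg : g ∈ Gfin then (⟨X g, (hXV g hg).1⟩ : T.L) else 0 with hP
  have hPcoe : ∀ g ∈ Gfin, ((P g : E)) = X g := by
    intro g hg
    rw [hP]
    simp only [hg, dif_pos]
  have hPeta : ∀ g ∈ Gfin, T.etaL (P g) = T.ee (X g) := by
    intro g hg
    have := T.ee_eq (P g)
    rw [hPcoe g hg] at this
    exact this.symm
  have heeX : ∀ g ∈ Gfin, 1 ≤ T.ee (X g) := fun g hg => T.ee_pos_of_VV (hXV g hg)
  set mm : E → ℕ := fun g => ⌊t * w g * ((T.ee (X g) : ℝ))⁻¹⌋₊ with hmm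
  set z : T.L := ∑ g ∈ Gfin, mm g • P g with hz
  -- (1) η(z) bound
  have h1 : T.etaL z ≤ (∑ g ∈ Gfin, mm g * T.etaL (P g)) + 2 * (T.M - 1) * Gfin.card := by
    refine le_trans (T.etaL_sum Gfin (fun g => mm g • P g)) ?_
    have : ∀ g ∈ Gfin, T.etaL (mm g • P g) ≤ mm g * T.etaL (P g) := fun g _ =>
      T.etaL_nsmul (mm g) (P g)
    have hs := Finset.sum_le_sum this
    omega
  -- (2) real bound on the sum
  have h2 : ((∑ g ∈ Gfin, mm g * T.etaL (P g) : ℕ) : ℝ) ≤ t := by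
    push_cast
    have hterm : ∀ g ∈ Gfin, (mm g : ℝ) * (T.etaL (P g) : ℝ) ≤ t * w g := by
      intro g hg
      rw [hPeta g hg]
      have hee : (0:ℝ) < (T.ee (X g) : ℝ) := by
        have := heeX g hg
        exact_mod_cast Nat.lt_of_lt_of_le Nat.zero_lt_one this
      have hfl : (mm g : ℝ) ≤ t * w g * ((T.ee (X g) : ℝ))⁻¹ := by
        rw [hmm]
        exact Nat.floor_le (by have := hw0 g hg; positivity)
      calc (mm g : ℝ) * (T.ee (X g) : ℝ) ≤ (t * w g * ((T.ee (X g) : ℝ))⁻¹) * (T.ee (X g) : ℝ) := by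
            apply mul_le_mul_of_nonneg_right hfl hee.le
        _ = t * w g := by field_simp
    calc ∑ g ∈ Gfin, (mm g : ℝ) * (T.etaL (P g) : ℝ) ≤ ∑ g ∈ Gfin, t * w g :=
          Finset.sum_le_sum hterm
      _ = t * ∑ g ∈ Gfin, w g := by rw [Finset.mul_sum]
      _ = t := by rw [hw1, mul_one]
  -- (4) distance from u to z
  have hzcoe : ((z : E)) = ∑ g ∈ Gfin, (mm g : ℝ) • (X g) := by
    rw [hz]
    push_cast
    apply Finset.sum_congr rfl
    intro g hg
    rw [hPcoe g hg]
    exact (Nat.cast_smul_eq_nsmul ℝ _ _).symm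
  have h4 : ‖u - (z : E)‖ ≤ r' := by
    have hdiff : t • kk - (z : E) = ∑ g ∈ Gfin, (t * w g * ((T.ee (X g) : ℝ))⁻¹ - mm g) • X g := by
      rw [hkkeq, hzcoe, Finset.smul_sum, ← Finset.sum_sub_distrib]
      apply Finset.sum_congr rfl
      intro g hg
      have key : ∀ (gv xv : E) (c : ℝ) (n : ℕ) (wv : ℝ), gv = c • xv →
          t • (wv • gv) - (n : ℝ) • xv = (t * wv * c - n) • xv := by
        intro gv xv c n wv hgx
        rw [hgx]
        match_scalars
        ring
      exact key g (X g) _ (mm g) (w g) (hXf g hg).symm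
    have hbound : ‖t • kk - (z : E)‖ ≤ Gfin.card * RV := by
      rw [hdiff]
      refine le_trans (norm_sum_le _ _) ?_
      have : ∀ g ∈ Gfin, ‖(t * w g * ((T.ee (X g) : ℝ))⁻¹ - mm g) • X g‖ ≤ RV := by
        intro g hg
        rw [norm_smul, Real.norm_eq_abs]
        have ha : (0:ℝ) ≤ t * w g * ((T.ee (X g) : ℝ))⁻¹ := by
          have := hw0 g hg
          positivity
        have hc1 : (0:ℝ) ≤ t * w g * ((T.ee (X g) : ℝ))⁻¹ - mm g := by
          rw [hmm]
          have := Nat.floor_le ha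
          simp only []
          linarith
        have hc2 : t * w g * ((T.ee (X g) : ℝ))⁻¹ - mm g ≤ 1 := by
          rw [hmm]
          have := Nat.lt_floor_add_one (t * w g * ((T.ee (X g) : ℝ))⁻¹)
          simp only []
          linarith
        have hX1 : ‖X g‖ ≤ RV := T.VV_bounded (X g) (hXV g hg)
        rw [abs_of_nonneg hc1]
        nlinarith [norm_nonneg (X g)]
      refine le_trans (Finset.sum_le_sum this) ?_
      rw [Finset.sum_const, nsmul_eq_mul]
    have : u - (z : E) = e + (t • kk - (z : E)) := by
      rw [hu]; abel
    rw [this, hr']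
    refine le_trans (norm_add_le _ _) ?_
    linarith
  -- (5) assemble
  have h5 : T.dd u 0 ≤ D + T.del z := by
    have htri := T.cd_triangle (T.tl u) (T.tl ((z : E))) (T.tl 0)
    have hloc : T.cd (T.tl u) (T.tl ((z : E))) ≤ D := by
      apply hD
      rw [dist_eq_norm]
      exact h4
    have hdz : T.cd (T.tl ((z : E))) (T.tl 0) = T.del z := T.dd_del z
    unfold dd
    omega
  have h6 : T.del z ≤ T.etaL z + 2 * (T.M - 1) := T.del_le_etaL z
  have hfin : (T.dd u 0 : ℝ) ≤ (D : ℝ) + (T.etaL z : ℝ) + 2 * ((T.M - 1 : ℕ) : ℝ) := by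
    have : (T.dd u 0 : ℕ) ≤ D + T.etaL z + 2 * (T.M - 1) := by omega
    exact_mod_cast this
  have h1' : (T.etaL z : ℝ) ≤ t + 2 * ((T.M - 1 : ℕ) : ℝ) * Gfin.card := by
    have hc : ((T.etaL z : ℕ) : ℝ) ≤ ((∑ g ∈ Gfin, mm g * T.etaL (P g) : ℕ) : ℝ)
        + 2 * ((T.M - 1 : ℕ) : ℝ) * Gfin.card := by
      exact_mod_cast h1
    linarith
  linarith


/-! ### coronas and the two covering claims -/

def suppC (P : Finset ι) (m : ℕ) : Set E :=
  {x | ∃ i₀ ∈ P, ∃ j, T.cd i₀ j ≤ m ∧ x ∈ closure (T.part j)}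

lemma suppC_nonempty {P : Finset ι} (hP : P.Nonempty) (m : ℕ) : (T.suppC P m).Nonempty := by
  obtain ⟨i₀, hi₀⟩ := hP
  exact ⟨T.cin i₀, i₀, hi₀, i₀, by rw [T.cd_self]; omega, subset_closure (T.cin_mem i₀)⟩

lemma zero_mem_KK' (hV : T.VV.Nonempty) : (0 : E) ∈ T.KK := T.zero_mem_KK hV.choose_spec

lemma exists_KK_rep (hV : T.VV.Nonempty) {p : T.L} {c : ℝ}
    (hc : (T.etaL p : ℝ) ≤ c) (hc0 : 0 < c) : ∃ kz ∈ T.KK, (p : E) = c • kz := by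
  by_cases hp : p = 0
  · exact ⟨0, T.zero_mem_KK' hV, by rw [hp]; simp⟩
  · set ea : ℝ := (T.etaL p : ℝ) with hea
    have he0 : 0 < ea := T.etaL_cast_pos hp
    have hmem := T.mem_KK hp
    have hw1 : (0:ℝ) ≤ ea / c := by positivity
    have hw2 : (0:ℝ) ≤ 1 - ea / c := by
      rw [sub_nonneg, div_le_one hc0]
      exact hc
    have hkz := T.KK_convex hmem (T.zero_mem_KK' hV) hw1 hw2 (by ring)
    refine ⟨_, hkz, ?_⟩
    have hne : ((T.etaL p : ℝ)) ≠ 0 := by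
      rw [hea] at he0
      exact ne_of_gt he0
    have hcne : c ≠ 0 := ne_of_gt hc0
    have hsc : c * (ea / c) * ((T.etaL p : ℝ))⁻¹ = 1 := by rw [hea]; field_simp
    rw [smul_add, smul_smul, smul_smul]
    simp [hsc]

lemma claimA (P : Finset ι) (hV : T.VV.Nonempty) : ∃ CA : ℝ, 0 ≤ CA ∧ ∀ m : ℕ, 1 ≤ m →
    ∀ x ∈ T.suppC P m, ∃ y ∈ T.KK, dist ((m : ℝ)⁻¹ • x) y ≤ CA / m := by
  obtain ⟨ρ, hρ0, hρ⟩ := T.rel_dense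
  obtain ⟨D2, hD2⟩ := T.cd_loc (2 * T.S)
  obtain ⟨Dρ, hDρ⟩ := T.cd_loc ρ
  set DP : ℕ := P.sup (fun i₀ => T.cd i₀ T.t0) with hDP
  set C₀ : ℕ := Dρ + D2 + DP with hC₀
  set RV : ℝ := 2 * T.S + ((3 * T.M - 2 : ℕ) : ℝ) * (2 * T.S + T.R) with hRV
  have hRV0 : 0 ≤ RV := by
    have h1 := T.hS
    have h2 := T.R_nonneg
    have h3 : (0:ℝ) ≤ ((3 * T.M - 2 : ℕ) : ℝ) := Nat.cast_nonneg _
    nlinarith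
  refine ⟨ρ + C₀ * RV, by positivity, ?_⟩
  rintro m hm x ⟨i₀, hi₀, j, hcd, hxj⟩
  obtain ⟨p, hp⟩ := hρ x
  -- combinatorial distance of p to origin
  have hxj2 : T.cd (T.tl x) j ≤ D2 := by
    have hdist : dist x (T.cin j) ≤ 2 * T.S := by
      have ha := T.hcout j hxj
      have hb := T.hcout j (subset_closure (T.cin_mem j))
      rw [Metric.mem_closedBall] at ha hb
      calc dist x (T.cin j) ≤ dist x (T.cout j) + dist (T.cout j) (T.cin j) := dist_triangle _ _ _
        _ ≤ T.S + T.S := add_le_add ha (by rw [dist_comm]; exact hb)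
        _ = 2 * T.S := by ring
    have := hD2 x (T.cin j) hdist
    rwa [T.tl_eq (T.cin_mem j)] at this
  have hpd : T.cd (T.tl ((p : E))) (T.tl x) ≤ Dρ := by
    apply hDρ
    rw [dist_comm, dist_eq_norm]
    exact hp
  have hDPle : T.cd i₀ T.t0 ≤ DP := Finset.le_sup (f := fun i => T.cd i T.t0) hi₀
  have hetap : T.etaL p ≤ m + C₀ := by
    have h1 : T.cd (T.tl ((p : E))) T.t0 ≤ Dρ + D2 + m + DP := by
      have t1 := T.cd_triangle (T.tl ((p : E))) (T.tl x) T.t0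
      have t2 := T.cd_triangle (T.tl x) j T.t0
      have t3 := T.cd_triangle j i₀ T.t0
      have t4 : T.cd j i₀ ≤ m := by rw [T.cd_symm]; exact hcd
      omega
    have h2 : T.del p ≤ Dρ + D2 + m + DP := by
      rw [del, ← T.tl_coe]
      exact h1
    have h3 := T.etaL_le_del p
    omega
  -- representation
  have hc0 : (0:ℝ) < ((m + C₀ : ℕ) : ℝ) := by
    have : 1 ≤ m + C₀ := by omega
    exact_mod_cast Nat.lt_of_lt_of_le Nat.zero_lt_one this
  obtain ⟨kz, hkz, hrep⟩ := T.exists_KK_rep hV (p := p) (c := ((m + C₀ : ℕ) : ℝ))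
    (by exact_mod_cast hetap) hc0
  refine ⟨kz, hkz, ?_⟩
  have hm0 : (0:ℝ) < (m : ℝ) := by exact_mod_cast hm
  have hkzRV : ‖kz‖ ≤ RV := by
    have := T.KK_bounded hkz
    rwa [Metric.mem_closedBall, dist_zero_right] at this
  calc dist ((m : ℝ)⁻¹ • x) kz
      ≤ dist ((m : ℝ)⁻¹ • x) ((m : ℝ)⁻¹ • (p : E)) + dist ((m : ℝ)⁻¹ • (p : E)) kz :=
        dist_triangle _ _ _
    _ ≤ ρ / m + C₀ * RV / m := by
        apply add_le_add
        · rw [dist_eq_norm, ← smul_sub, norm_smul, Real.norm_eq_abs,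
            abs_of_nonneg (by positivity : (0:ℝ) ≤ (m:ℝ)⁻¹)]
          rw [div_eq_inv_mul]
          exact mul_le_mul_of_nonneg_left hp (by positivity)
        · rw [hrep, dist_eq_norm]
          have : (m : ℝ)⁻¹ • (((m + C₀ : ℕ) : ℝ) • kz) - kz
              = ((((m + C₀ : ℕ) : ℝ) / m) - 1) • kz := by
            rw [smul_smul, sub_smul, one_smul, div_eq_inv_mul]
          rw [this, norm_smul, Real.norm_eq_abs]
          have he1 : ((m + C₀ : ℕ) : ℝ) = (m : ℝ) + (C₀ : ℝ) := by push_cast; ring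
          have he2 : (((m + C₀ : ℕ) : ℝ) / m) - 1 = (C₀ : ℝ) / m := by
            rw [he1]
            field_simp
            ring
          rw [he2, abs_of_nonneg (by positivity), div_mul_eq_mul_div]
          exact (div_le_div_iff_of_pos_right hm0).mpr
            (mul_le_mul_of_nonneg_left hkzRV (Nat.cast_nonneg _))
    _ = (ρ + C₀ * RV) / m := by ring

lemma claimB (P : Finset ι) (hP : P.Nonempty) (hV : T.VV.Nonempty) :
    ∃ (CB : ℝ) (m₀ : ℕ), 0 ≤ CB ∧ ∀ m : ℕ, m₀ ≤ m → ∀ y ∈ T.KK,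
      ∃ x ∈ T.suppC P m, dist ((m : ℝ)⁻¹ • x) y ≤ CB / m := by
  obtain ⟨ρ, hρ0, hρ⟩ := T.rel_dense
  obtain ⟨C, hC0, hC⟩ := T.dd_le_of_near_smul ρ
  set DP : ℕ := P.sup (fun i₀ => T.cd i₀ T.t0) with hDP
  obtain ⟨i₀, hi₀⟩ := hP
  set RV : ℝ := 2 * T.S + ((3 * T.M - 2 : ℕ) : ℝ) * (2 * T.S + T.R) with hRV
  have hRV0 : 0 ≤ RV := by
    have h1 := T.hS
    have h2 := T.R_nonneg
    have h3 : (0:ℝ) ≤ ((3 * T.M - 2 : ℕ) : ℝ) := Nat.cast_nonneg _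
    nlinarith
  set C₂ : ℕ := ⌈C⌉₊ + DP + 1 with hC₂
  refine ⟨ρ + C₂ * RV, C₂, by positivity, ?_⟩
  intro m hm y hy
  have hm0 : (0:ℝ) < (m:ℝ) := by
    have : 1 ≤ m := by omega
    exact_mod_cast Nat.lt_of_lt_of_le Nat.zero_lt_one this
  set t : ℝ := (m : ℝ) - (C₂ : ℝ) with htdef
  have ht0 : 0 ≤ t := by
    rw [htdef, sub_nonneg]
    exact_mod_cast hm
  obtain ⟨p, hp⟩ := hρ (t • y)
  -- combinatorial bound on p
  have hdd : (T.dd ((p : E)) 0 : ℝ) ≤ t + C := by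
    apply hC t ((p : E)) ht0
    refine ⟨y, hy, (p : E) - t • y, ?_, by abel⟩
    rw [← norm_neg]
    simpa [neg_sub] using hp
  have hddN : T.dd ((p : E)) 0 + DP ≤ m := by
    have h1 : (T.dd ((p : E)) 0 : ℝ) ≤ (m : ℝ) - (DP : ℝ) - 1 := by
      have h2 : C ≤ (⌈C⌉₊ : ℝ) := Nat.le_ceil C
      have h3 : ((C₂ : ℕ) : ℝ) = (⌈C⌉₊ : ℝ) + (DP : ℝ) + 1 := by rw [hC₂]; push_cast; ring
      rw [htdef] at hdd
      rw [h3] at hdd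
      linarith
    have h4 : ((T.dd ((p : E)) 0 + DP : ℕ) : ℝ) ≤ (m : ℝ) := by push_cast; linarith
    exact_mod_cast h4
  -- p is in the corona
  have hmem : ((p : E)) ∈ T.suppC P m := by
    refine ⟨i₀, hi₀, T.tl ((p : E)), ?_, subset_closure (T.mem_tl _)⟩
    have t1 := T.cd_triangle i₀ T.t0 (T.tl ((p : E)))
    have t2 : T.cd i₀ T.t0 ≤ DP := Finset.le_sup (f := fun i => T.cd i T.t0) hi₀
    have t3 : T.cd T.t0 (T.tl ((p : E))) = T.dd ((p : E)) 0 := by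
      rw [T.cd_symm]; rfl
    omega
  refine ⟨(p : E), hmem, ?_⟩
  have hyRV : ‖y‖ ≤ RV := by
    have := T.KK_bounded hy
    rwa [Metric.mem_closedBall, dist_zero_right] at this
  calc dist ((m : ℝ)⁻¹ • (p : E)) y
      ≤ dist ((m : ℝ)⁻¹ • (p : E)) ((m : ℝ)⁻¹ • (t • y)) + dist ((m : ℝ)⁻¹ • (t • y)) y :=
        dist_triangle _ _ _
    _ ≤ ρ / m + C₂ * RV / m := by
        apply add_le_add
        · rw [dist_eq_norm, ← smul_sub, norm_smul, Real.norm_eq_abs,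
            abs_of_nonneg (by positivity : (0:ℝ) ≤ (m:ℝ)⁻¹), div_eq_inv_mul, norm_sub_rev]
          exact mul_le_mul_of_nonneg_left hp (by positivity)
        · rw [dist_eq_norm]
          have : (m : ℝ)⁻¹ • (t • y) - y = ((t / m) - 1) • y := by
            rw [smul_smul, sub_smul, one_smul, div_eq_inv_mul]
          rw [this, norm_smul, Real.norm_eq_abs]
          have he2 : t / m - 1 = -((C₂ : ℝ) / m) := by
            rw [htdef]
            field_simp
            ring
          rw [he2, abs_neg, abs_of_nonneg (by positivity), div_mul_eq_mul_div]
          exact (div_le_div_iff_of_pos_right hm0).mpr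
            (mul_le_mul_of_nonneg_left hyRV (Nat.cast_nonneg _))
    _ = (ρ + C₂ * RV) / m := by ring


lemma main_conv (P : Finset ι) (hP : P.Nonempty) :
    Filter.Tendsto (fun m : ℕ => Metric.hausdorffDist (((m : ℝ)⁻¹) • T.suppC P m) T.KK)
      Filter.atTop (nhds 0) := by
  by_cases hV : T.VV.Nonempty
  · obtain ⟨CA, hCA0, hA⟩ := T.claimA P hV
    obtain ⟨CB, m₀, hCB0, hB⟩ := T.claimB P hP hV
    set Cm := max CA CB with hCm
    have hCm0 : 0 ≤ Cm := le_trans hCA0 (le_max_left _ _)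
    apply squeeze_zero' (Filter.Eventually.of_forall (fun m => Metric.hausdorffDist_nonneg))
      ?_ (tendsto_const_div_atTop_nhds_zero_nat Cm)
    rw [Filter.eventually_atTop]
    refine ⟨max m₀ 1, fun m hm => ?_⟩
    have hm1 : 1 ≤ m := le_trans (le_max_right _ _) hm
    have hm₀ : m₀ ≤ m := le_trans (le_max_left _ _) hm
    have hmR : (0:ℝ) < (m : ℝ) := by exact_mod_cast Nat.lt_of_lt_of_le Nat.zero_lt_one hm1
    apply Metric.hausdorffDist_le_of_mem_dist (by positivity)
    · rintro x' ⟨x, hx, rfl⟩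
      obtain ⟨y, hy, hxy⟩ := hA m hm1 x hx
      exact ⟨y, hy, le_trans hxy ((div_le_div_iff_of_pos_right hmR).mpr (le_max_left _ _))⟩
    · intro y hy
      obtain ⟨x, hx, hxy⟩ := hB m hm₀ y hy
      refine ⟨(m : ℝ)⁻¹ • x, ⟨x, hx, rfl⟩, ?_⟩
      rw [dist_comm]
      exact le_trans hxy ((div_le_div_iff_of_pos_right hmR).mpr (le_max_right _ _))
  · have hVempty : T.VV = ∅ := Set.not_nonempty_iff_eq_empty.mp hV
    have hKempty : T.KK = ∅ := by
      rw [KK, hVempty]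
      simp
    have : ∀ m : ℕ, Metric.hausdorffDist (((m : ℝ)⁻¹) • T.suppC P m) T.KK = 0 := by
      intro m
      rw [hKempty]
      exact Metric.hausdorffDist_empty
    simp only [this]
    exact tendsto_const_nhds

end Setup
end CoronaAux


open Pointwise

theorem stmt_18 {l : ℕ} {ι : Type*}
    (part : ι → Set (EuclideanSpace ℝ (Fin l)))
    (h_part : ∀ x : EuclideanSpace ℝ (Fin l), ∃! i, x ∈ part i)
    -- Delone axiom (N)
    (h_N : ∃ s S : ℝ, 0 < s ∧ 0 < S ∧ ∀ i,
      (∃ c, Metric.ball c s ⊆ part i) ∧ ∃ c, closure (part i) ⊆ Metric.closedBall c S)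
    (adj : ι → ι → Prop)
    (h_refl : ∀ i, adj i i) (h_symm : ∀ i j, adj i j → adj j i)
    -- adjacency axiom (a): connectivity
    (h_conn : ∀ i j, ∃ (m : ℕ) (f : ℕ → ι), f 0 = i ∧ f m = j ∧
      ∀ k < m, adj (f k) (f (k + 1)))
    -- adjacency axiom (b)
    (h_bdd : ∃ M₁ : ℕ, ∀ i j, (closure (part i) ∩ closure (part j)).Nonempty →
      ∃ m ≤ M₁, ∃ f : ℕ → ι, f 0 = i ∧ f m = j ∧ ∀ k < m, adj (f k) (f (k + 1)))
    -- adjacency axiom (c)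
    (h_dist : ∃ R : ℝ, ∀ i j, adj i j →
      Metric.hausdorffDist (closure (part i)) (closure (part j)) ≤ R)
    (L : AddSubgroup (EuclideanSpace ℝ (Fin l)))
    -- `L` is a lattice: it contains `l` linearly independent periods
    (h_lattice : ∃ b : Module.Basis (Fin l) ℝ (EuclideanSpace ℝ (Fin l)), ∀ k, b k ∈ L)
    (σ : L → ι ≃ ι)
    (hσpart : ∀ (p : L) (i : ι), part (σ p i) = (p : EuclideanSpace ℝ (Fin l)) +ᵥ part i)
    (hσadj : ∀ (p : L) (i j : ι), adj (σ p i) (σ p j) ↔ adj i j)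
    (M : ℕ)
    (hM : ∃ reps : Finset ι, reps.card = M ∧
      (∀ i : ι, ∃ j ∈ reps, ∃ p : L, σ p j = i) ∧
      (∀ j₁ ∈ reps, ∀ j₂ ∈ reps, (∃ p : L, σ p j₁ = j₂) → j₁ = j₂)) :
    -- the combinatorial patch distance
    let n : EuclideanSpace ℝ (Fin l) → EuclideanSpace ℝ (Fin l) → ℕ :=
      fun x y => sInf {m | ∃ f : ℕ → ι, (∀ k < m, adj (f k) (f (k + 1))) ∧
        x ∈ part (f 0) ∧ y ∈ part (f m)}
    let η : EuclideanSpace ℝ (Fin l) → ℕ :=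
      fun v => sInf {m | ∃ a b, a - b = v ∧ n a b = m}
    -- the support of the `m`-th corona of a patch `P`
    let suppC : Finset ι → ℕ → Set (EuclideanSpace ℝ (Fin l)) :=
      fun P m => {x | ∃ i₀ ∈ P, ∃ f : ℕ → ι, f 0 = i₀ ∧
        (∀ k < m, adj (f k) (f (k + 1))) ∧ x ∈ closure (part (f m))}
    let V : Set (EuclideanSpace ℝ (Fin l)) :=
      {x | x ∈ L ∧ 0 < n x 0 ∧ n x 0 ≤ 3 * M - 2}
    let K : Set (EuclideanSpace ℝ (Fin l)) :=
      convexHull ℝ ((fun x => ((η x : ℝ)⁻¹ • x)) '' V)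
    V.Finite ∧ Convex ℝ K ∧ (∀ y ∈ K, -y ∈ K) ∧
    ∀ P : Finset ι, P.Nonempty →
      Filter.Tendsto (fun m : ℕ => Metric.hausdorffDist (((m : ℝ)⁻¹) • suppC P m) K)
        Filter.atTop (nhds 0) := by
  intro n η suppC V K
  obtain ⟨s, S, hs, hS, hN⟩ := h_N
  obtain ⟨R, hR⟩ := h_dist
  obtain ⟨b, hb⟩ := h_lattice
  obtain ⟨reps, hcard, hcover, hsep⟩ := hM
  set T : CoronaAux.Setup l ι :=
    { part := part, hpart := h_part, s := s, S := S, hs := hs, hS := hS,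
      cin := fun i => (hN i).1.choose, hcin := fun i => (hN i).1.choose_spec,
      cout := fun i => (hN i).2.choose, hcout := fun i => (hN i).2.choose_spec,
      adj := adj, hrefl := h_refl, hsymm := h_symm, hconn := h_conn,
      R := R, hR := hR, L := L, bas := b, hbas := hb,
      σ := σ, hσpart := hσpart, hσadj := hσadj,
      M := M, reps := reps, hcard := hcard, hcover := hcover, hsep := hsep } with hT
  have hn : ∀ x y, n x y = T.dd x y := by
    intro x y
    show sInf _ = sInf {m | ∃ f, T.chainProp f m (T.tl x) (T.tl y)}
    congr 1
    ext m
    constructor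
    · rintro ⟨f, hadj, hx0, hym⟩
      exact ⟨f, (T.tl_eq hx0).symm, (T.tl_eq hym).symm, hadj⟩
    · rintro ⟨f, h0, hm, hadj⟩
      exact ⟨f, hadj, by rw [h0]; exact T.mem_tl x, by rw [hm]; exact T.mem_tl y⟩
  have hnn : n = T.dd := funext fun x => funext fun y => hn x y
  have hηη : η = T.ee := by
    funext v
    show sInf {m | ∃ a b, a - b = v ∧ n a b = m} = sInf {m | ∃ a b, a - b = v ∧ T.dd a b = m}
    rw [hnn]
  have hVV : V = T.VV := by
    show {x | x ∈ L ∧ 0 < n x 0 ∧ n x 0 ≤ 3 * M - 2} = _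
    rw [hnn]
    rfl
  have hKK : K = T.KK := by
    show convexHull ℝ ((fun x => ((η x : ℝ)⁻¹ • x)) '' V) = _
    rw [hηη, hVV]
    rfl
  have hsupp : ∀ (P : Finset ι) (m : ℕ), suppC P m = T.suppC P m := by
    intro P m
    ext x
    constructor
    · rintro ⟨i₀, hi₀, f, h0, hadj, hx⟩
      exact ⟨i₀, hi₀, f m, T.cd_le ⟨h0, rfl, hadj⟩, hx⟩
    · rintro ⟨i₀, hi₀, j, hcd, hx⟩
      obtain ⟨f, h0, hm, hadj⟩ := T.chain_pad hcd
      exact ⟨i₀, hi₀, f, h0, hadj, by rw [hm]; exact hx⟩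
  refine ⟨?_, ?_, ?_, ?_⟩
  · rw [hVV]; exact T.VV_finite
  · rw [hKK]; exact T.KK_convex
  · intro y hy
    rw [hKK] at hy ⊢
    exact T.KK_symm hy
  · intro P hP
    have heq : (fun m : ℕ => Metric.hausdorffDist (((m : ℝ)⁻¹) • suppC P m) K)
        = fun m : ℕ => Metric.hausdorffDist (((m : ℝ)⁻¹) • T.suppC P m) T.KK := by
      funext m
      rw [hsupp, hKK]
    rw [heq]
    exact T.main_conv P hP
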